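/- Let R be the ring of integers of a finite extension L of Q_p, let M be a finitely generated R-module, and let U : M → M be an R-linear endomorphism. Then the limit e = lim_{n→∞} U^{n!} exists in End_R(M) (for the p-adic topology), e is an idempotent commuting with U, M decomposes as M = eM ⊕ (1−e)M, U restricts to an automorphism of eM, and U is topologically nilpotent on (1−e)M. -/

import Mathlib

set_option synthInstance.maxHeartbeats 400000

set_option maxHeartbeats 1600000

open Pointwise



theorem mem_span_pow_smul_iff {S : Type*} [CommRing S] {A : Type*} [AddCommGroup A] [Module S A]
    (r : S) (i : ℕ) (x : A) :
    x ∈ (Ideal.span {r}) ^ i • (⊤ : Submodule S A) ↔ ∃ y, x = r ^ i • y := by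
  rw [Ideal.span_singleton_pow, Submodule.ideal_span_singleton_smul]
  constructor
  · intro h
    have h2 : x ∈ ((r ^ i • (⊤ : Submodule S A) : Submodule S A) : Set A) := h
    rw [Submodule.coe_pointwise_smul] at h2
    obtain ⟨y, -, rfl⟩ := Set.mem_smul_set.1 h2
    exact ⟨y, rfl⟩
  · rintro ⟨y, rfl⟩
    exact Submodule.smul_mem_pointwise_smul y _ ⊤ trivial

theorem aux_finiteQuot (p : ℕ) [Fact p.Prime] (A : Type*) [AddCommGroup A] [Module ℤ_[p] A]
    [Module.Finite ℤ_[p] A] (i : ℕ) :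
    Finite (A ⧸ ((Ideal.span {(p : ℤ_[p])}) ^ i • (⊤ : Submodule ℤ_[p] A))) := by
  obtain ⟨k, g, hg⟩ := Module.Finite.exists_fin (R := ℤ_[p]) (M := A)
  haveI : NeZero (p ^ i) := ⟨pow_ne_zero _ (Fact.out (p := p.Prime)).ne_zero⟩
  have hsurj : Function.Surjective (PadicInt.toZModPow (p := p) i) := by
    intro y
    exact ⟨((y.val : ℕ) : ℤ_[p]), by rw [map_natCast]; exact ZMod.natCast_rightInverse y⟩
  set N := (Ideal.span {(p : ℤ_[p])}) ^ i • (⊤ : Submodule ℤ_[p] A) with hN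
  refine Finite.of_surjective
    (fun c : Fin k → ZMod (p ^ i) =>
      (Submodule.Quotient.mk (∑ j, (Function.surjInv hsurj (c j)) • g j) : A ⧸ N)) ?_
  intro q
  obtain ⟨a, rfl⟩ := Submodule.Quotient.mk_surjective N q
  have ha : a ∈ Submodule.span ℤ_[p] (Set.range g) := hg ▸ Submodule.mem_top
  obtain ⟨c, hc⟩ := (Submodule.mem_span_range_iff_exists_fun ℤ_[p]).1 ha
  refine ⟨fun j => PadicInt.toZModPow i (c j), ?_⟩
  rw [Submodule.Quotient.eq]
  have : (∑ j, (Function.surjInv hsurj (PadicInt.toZModPow i (c j))) • g j) - a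
      = ∑ j, ((Function.surjInv hsurj (PadicInt.toZModPow i (c j)) - c j) • g j) := by
    rw [← hc, ← Finset.sum_sub_distrib]
    simp [sub_smul]
  rw [this, hN, Ideal.span_singleton_pow]
  refine Submodule.sum_mem _ fun j _ => Submodule.smul_mem_smul ?_ Submodule.mem_top
  rw [← PadicInt.ker_toZModPow, RingHom.mem_ker, map_sub, Function.surjInv_eq hsurj, sub_self]

theorem mem_span_pow_smul_iff' {S : Type*} [CommRing S] {A : Type*} [AddCommGroup A] [Module S A]
    (r : S) (i : ℕ) (x : A) :
    x ∈ (Ideal.span {r}) ^ i • (⊤ : Submodule S A) ↔ ∃ y, x = r ^ i • y := by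
  rw [Ideal.span_singleton_pow, Submodule.ideal_span_singleton_smul]
  constructor
  · intro h
    have h2 : x ∈ ((r ^ i • (⊤ : Submodule S A) : Submodule S A) : Set A) := h
    rw [Submodule.coe_pointwise_smul] at h2
    obtain ⟨y, -, rfl⟩ := Set.mem_smul_set.1 h2
    exact ⟨y, rfl⟩
  · rintro ⟨y, rfl⟩
    exact Submodule.smul_mem_pointwise_smul y _ ⊤ trivial

theorem aux_haus (p : ℕ) [Fact p.Prime] (A : Type*) [AddCommGroup A] [Module ℤ_[p] A]
    [Module.Finite ℤ_[p] A] :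
    (⨅ i : ℕ, (Ideal.span {(p : ℤ_[p])}) ^ i • (⊤ : Submodule ℤ_[p] A)) = ⊥ := by
  obtain ⟨k, π, hπ⟩ := Module.Finite.exists_fin' ℤ_[p] A
  let E := (Fin k → ℤ_[p]) ⧸ LinearMap.ker π
  let ψ : E ≃ₗ[ℤ_[p]] A := π.quotKerEquivOfSurjective hπ
  haveI : Module.Finite ℤ_[p] E :=
    Module.Finite.of_surjective (LinearMap.ker π).mkQ (Submodule.Quotient.mk_surjective _)
  have hI : Ideal.span {(p : ℤ_[p])} ≠ ⊤ := by
    rw [← PadicInt.maximalIdeal_eq_span_p]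
    exact (IsLocalRing.maximalIdeal.isMaximal ℤ_[p]).ne_top
  have hE := Ideal.iInf_pow_smul_eq_bot_of_isLocalRing
    (M := E) (Ideal.span {(p : ℤ_[p])}) hI
  rw [eq_bot_iff]
  intro x hx
  rw [Submodule.mem_iInf] at hx
  have hmem : ψ.symm x ∈ (⊥ : Submodule ℤ_[p] E) := by
    rw [← hE, Submodule.mem_iInf]
    intro i
    have h2 : Submodule.map (ψ.symm.toLinearMap)
        ((Ideal.span {(p : ℤ_[p])}) ^ i • (⊤ : Submodule ℤ_[p] A))
        = (Ideal.span {(p : ℤ_[p])}) ^ i • (⊤ : Submodule ℤ_[p] E) := by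
      rw [Submodule.map_smul'', Submodule.map_top, LinearEquiv.range]
    rw [← h2]
    exact Submodule.mem_map_of_mem (hx i)
  rw [Submodule.mem_bot] at hmem
  rw [Submodule.mem_bot]
  have := congrArg ψ hmem
  simpa using this

theorem aux_prec (p : ℕ) [Fact p.Prime] (A : Type*) [AddCommGroup A] [Module ℤ_[p] A]
    [Module.Finite ℤ_[p] A] : IsPrecomplete (Ideal.span {(p : ℤ_[p])}) A := by
  constructor
  intro f hf
  obtain ⟨k, g, hg⟩ := Module.Finite.exists_fin (R := ℤ_[p]) (M := A)
  have hstep : ∀ n : ℕ, ∃ a : Fin k → ℤ_[p],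
      f (n + 1) - f n = ∑ j, ((p : ℤ_[p]) ^ n * a j) • g j := by
    intro n
    have h1 : f (n + 1) - f n ∈ (Ideal.span {(p : ℤ_[p])}) ^ n • (⊤ : Submodule ℤ_[p] A) := by
      have := hf (Nat.le_succ n)
      rw [SModEq.sub_mem] at this
      simpa using (Submodule.neg_mem _ this)
    obtain ⟨y, hy⟩ := (mem_span_pow_smul_iff' _ _ _).1 h1
    have hy2 : y ∈ Submodule.span ℤ_[p] (Set.range g) := hg ▸ Submodule.mem_top
    obtain ⟨c, hc⟩ := (Submodule.mem_span_range_iff_exists_fun ℤ_[p]).1 hy2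
    refine ⟨c, ?_⟩
    rw [hy, ← hc, Finset.smul_sum]
    simp [smul_smul]
  choose a ha using hstep
  have hprecS : IsPrecomplete (Ideal.span {(p : ℤ_[p])}) ℤ_[p] := by
    rw [← PadicInt.maximalIdeal_eq_span_p]
    infer_instance
  have hL : ∀ j : Fin k, ∃ Lj, ∀ n,
      (∑ t ∈ Finset.range n, (p : ℤ_[p]) ^ t * a t j) ≡ Lj
        [SMOD (Ideal.span {(p : ℤ_[p])}) ^ n • (⊤ : Submodule ℤ_[p] ℤ_[p])] := by
    intro j
    apply hprecS.prec
    intro m n hmn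
    rw [SModEq.sub_mem]
    have h1 : (∑ t ∈ Finset.Ico m n, (p : ℤ_[p]) ^ t * a t j)
        = ∑ t ∈ Finset.range (n - m), (p : ℤ_[p]) ^ m * ((p : ℤ_[p]) ^ t * a (m + t) j) := by
      rw [Finset.sum_Ico_eq_sum_range]
      exact Finset.sum_congr rfl fun t _ => by rw [pow_add, mul_assoc]
    have h2 := Finset.sum_Ico_eq_sub (fun t => (p : ℤ_[p]) ^ t * a t j) hmn
    have hd : (∑ t ∈ Finset.range m, (p : ℤ_[p]) ^ t * a t j)
        - (∑ t ∈ Finset.range n, (p : ℤ_[p]) ^ t * a t j)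
        = -(∑ t ∈ Finset.range (n - m), (p : ℤ_[p]) ^ m * ((p : ℤ_[p]) ^ t * a (m + t) j)) := by
      rw [← h1, h2, neg_sub]
    rw [hd]
    refine Submodule.neg_mem _ ((mem_span_pow_smul_iff' _ _ _).2
      ⟨∑ t ∈ Finset.range (n - m), (p : ℤ_[p]) ^ t * a (m + t) j, ?_⟩)
    rw [smul_eq_mul, Finset.mul_sum]
  choose Lf hLf using hL
  refine ⟨f 0 + ∑ j, Lf j • g j, ?_⟩
  intro n
  rw [SModEq.sub_mem]
  have htel : f n = f 0 + ∑ j, (∑ t ∈ Finset.range n, (p : ℤ_[p]) ^ t * a t j) • g j := by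
    have h0 : f n - f 0 = ∑ t ∈ Finset.range n, (f (t + 1) - f t) := (Finset.sum_range_sub f n).symm
    have h1 : ∑ t ∈ Finset.range n, (f (t + 1) - f t)
        = ∑ j, (∑ t ∈ Finset.range n, (p : ℤ_[p]) ^ t * a t j) • g j := by
      rw [Finset.sum_congr rfl fun t _ => ha t, Finset.sum_comm]
      refine Finset.sum_congr rfl fun j _ => ?_
      rw [Finset.sum_smul]
    rw [h1] at h0
    rw [← h0]
    abel
  rw [htel]
  have hsub : (f 0 + ∑ j, (∑ t ∈ Finset.range n, (p : ℤ_[p]) ^ t * a t j) • g j)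
      - (f 0 + ∑ j, Lf j • g j)
      = ∑ j, ((∑ t ∈ Finset.range n, (p : ℤ_[p]) ^ t * a t j) - Lf j) • g j := by
    rw [add_sub_add_left_eq_sub, ← Finset.sum_sub_distrib]
    exact Finset.sum_congr rfl fun j _ => (sub_smul _ _ _).symm
  rw [hsub]
  refine Submodule.sum_mem _ fun j _ => ?_
  have := hLf j n
  rw [SModEq.sub_mem] at this
  obtain ⟨y, hy⟩ := (mem_span_pow_smul_iff' _ _ _).1 this
  rw [hy]
  refine (mem_span_pow_smul_iff' _ _ _).2 ⟨y • g j, ?_⟩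
  exact smul_assoc _ _ _
/-- Hida's ordinary projector: Let `R` be the ring of integers of a finite
extension `L/ℚ_p`, `M` a finitely generated `R`-module and `U` an `R`-linear endomorphism
of `M`.  Then `e = lim_{n→∞} U^{n!}` exists `p`-adically in `End_R(M)`, is an idempotent
commuting with `U`, `M = eM ⊕ (1−e)M`, `U` restricts to an automorphism of `eM`, and `U`
is topologically nilpotent on `(1−e)M`. -/
theorem asai_stmt_11 (p : ℕ) [Fact p.Prime]
    (L : Type*) [Field L] [Algebra ℤ_[p] L] [Algebra ℚ_[p] L] [IsScalarTower ℤ_[p] ℚ_[p] L] [FiniteDimensional ℚ_[p] L]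
    (M : Type*) [AddCommGroup M] [Module (integralClosure ℤ_[p] L) M]
    [Module.Finite (integralClosure ℤ_[p] L) M]
    (U : Module.End (integralClosure ℤ_[p] L) M) :
    ∃ e : Module.End (integralClosure ℤ_[p] L) M,
      -- convergence of `U^{n!}` to `e` in the `p`-adic topology
      (∀ i : ℕ, ∃ N₀ : ℕ, ∀ n ≥ N₀, ∀ x : M,
        (U ^ n.factorial) x - e x ∈
          (Ideal.span {(p : integralClosure ℤ_[p] L)}) ^ i •
            (⊤ : Submodule (integralClosure ℤ_[p] L) M)) ∧
      -- idempotent commuting with `U`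
      e * e = e ∧ e * U = U * e ∧
      -- `M = eM ⊕ (1−e)M`
      IsCompl (LinearMap.range e) (LinearMap.range (1 - e)) ∧
      -- `U` restricts to an automorphism of `eM`
      Submodule.map U (LinearMap.range e) = LinearMap.range e ∧
      (∀ x : M, U (e x) = 0 → e x = 0) ∧
      -- `U` topologically nilpotent on `(1−e)M`
      (∀ i : ℕ, ∃ N₀ : ℕ, ∀ n ≥ N₀, ∀ x : M,
        (U ^ n) ((1 - e) x) ∈
          (Ideal.span {(p : integralClosure ℤ_[p] L)}) ^ i •
            (⊤ : Submodule (integralClosure ℤ_[p] L) M)) := by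
  classical
  haveI hRfin : Module.Finite ℤ_[p] (integralClosure ℤ_[p] L) :=
    IsIntegralClosure.finite ℤ_[p] ℚ_[p] L (integralClosure ℤ_[p] L)
  haveI hRnoeth : IsNoetherianRing (integralClosure ℤ_[p] L) :=
    IsIntegralClosure.isNoetherianRing ℤ_[p] ℚ_[p] L (integralClosure ℤ_[p] L)
  letI : Module ℤ_[p] M := Module.compHom M (algebraMap ℤ_[p] (integralClosure ℤ_[p] L))
  have hsmul : ∀ (s : ℤ_[p]) (m : M), s • m = (algebraMap ℤ_[p] (integralClosure ℤ_[p] L) s) • m :=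
    fun s m => rfl
  letI : IsScalarTower ℤ_[p] (integralClosure ℤ_[p] L) M :=
    ⟨fun s r m => by
      show (s • r) • m = (algebraMap ℤ_[p] (integralClosure ℤ_[p] L) s) • (r • m)
      rw [Algebra.smul_def, mul_smul]⟩
  letI : SMulCommClass (integralClosure ℤ_[p] L) ℤ_[p] M :=
    ⟨fun r s m => by
      show r • (algebraMap ℤ_[p] (integralClosure ℤ_[p] L) s) • m
        = (algebraMap ℤ_[p] (integralClosure ℤ_[p] L) s) • (r • m)
      rw [smul_smul, smul_smul, mul_comm]⟩
  haveI : Module.Finite ℤ_[p] M := Module.Finite.trans (integralClosure ℤ_[p] L) M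
  haveI : IsNoetherian (integralClosure ℤ_[p] L) M :=
    isNoetherian_of_isNoetherianRing_of_finite (integralClosure ℤ_[p] L) M
  -- finiteness of the endomorphism algebra over ℤ_[p]
  haveI hEndFin : Module.Finite ℤ_[p] (Module.End (integralClosure ℤ_[p] L) M) := by
    obtain ⟨k, g, hg⟩ := Module.Finite.exists_fin (R := ℤ_[p]) (M := M)
    let Φ : Module.End (integralClosure ℤ_[p] L) M →ₗ[ℤ_[p]] (Fin k → M) :=
      { toFun := fun f j => f (g j)
        map_add' := fun f1 f2 => rfl
        map_smul' := fun s f => rfl }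
    have hΦinj : Function.Injective Φ := by
      intro f1 f2 h
      have hsub : ∀ x : M, (f1 - f2) x = 0 := by
        intro x
        have hx : x ∈ Submodule.span ℤ_[p] (Set.range g) := hg ▸ Submodule.mem_top
        induction hx using Submodule.span_induction with
        | mem x hx =>
            obtain ⟨j, rfl⟩ := hx
            have h2 : f1 (g j) = f2 (g j) := congrFun h j
            rw [LinearMap.sub_apply, h2, sub_self]
        | zero => simp
        | add x y _ _ hx hy => rw [map_add, hx, hy, add_zero]
        | smul s x _ hx => rw [LinearMap.map_smul_of_tower, hx, smul_zero]
      apply LinearMap.ext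
      intro x
      have := hsub x
      rwa [LinearMap.sub_apply, sub_eq_zero] at this
    haveI := isNoetherian_of_injective Φ hΦinj
    exact Module.IsNoetherian.finite ℤ_[p] _
  -- the p-adic "ideal filtration" on the endomorphism algebra
  let II : ℕ → Submodule ℤ_[p] (Module.End (integralClosure ℤ_[p] L) M) :=
    fun i => (Ideal.span {(p : ℤ_[p])}) ^ i • ⊤
  -- pointwise translation
  have happly : ∀ (i : ℕ) (F : Module.End (integralClosure ℤ_[p] L) M), F ∈ II i → ∀ x : M,
      F x ∈ (Ideal.span {(p : integralClosure ℤ_[p] L)}) ^ i •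
        (⊤ : Submodule (integralClosure ℤ_[p] L) M) := by
    intro i F hF x
    obtain ⟨c, hc⟩ := (mem_span_pow_smul_iff' _ _ _).1 hF
    refine (mem_span_pow_smul_iff' _ _ _).2 ⟨c x, ?_⟩
    rw [hc, LinearMap.smul_apply, hsmul, map_pow, map_natCast]
  -- multiplicative compatibility of the congruences
  have hmulL : ∀ (i : ℕ) (z x y : Module.End (integralClosure ℤ_[p] L) M),
      x - y ∈ II i → z * x - z * y ∈ II i := by
    intro i z x y h
    obtain ⟨c, hc⟩ := (mem_span_pow_smul_iff' _ _ _).1 h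
    refine (mem_span_pow_smul_iff' _ _ _).2 ⟨z * c, ?_⟩
    rw [← mul_sub, hc]
    ext m
    simp [Module.End.mul_apply, LinearMap.map_smul_of_tower]
  have hmulR : ∀ (i : ℕ) (z x y : Module.End (integralClosure ℤ_[p] L) M),
      x - y ∈ II i → x * z - y * z ∈ II i := by
    intro i z x y h
    obtain ⟨c, hc⟩ := (mem_span_pow_smul_iff' _ _ _).1 h
    refine (mem_span_pow_smul_iff' _ _ _).2 ⟨c * z, ?_⟩
    rw [← sub_mul, hc]
    ext m
    simp [Module.End.mul_apply]
  -- eventual periodicity of powers of U modulo p^i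
  have key : ∀ i : ℕ, ∃ a d : ℕ, 0 < d ∧
      ∀ x y : ℕ, a ≤ x → a ≤ y → x % d = y % d → U ^ x - U ^ y ∈ II i := by
    intro i
    haveI : Finite ((Module.End (integralClosure ℤ_[p] L) M) ⧸ II i) := by
      have := aux_finiteQuot p (Module.End (integralClosure ℤ_[p] L) M) i
      exact this
    obtain ⟨x0, y0, hne, heq⟩ := Finite.exists_ne_map_eq_of_infinite
      (fun n : ℕ => Submodule.Quotient.mk (p := II i) (U ^ n))
    have H : ∃ a b : ℕ, a < b ∧ U ^ b - U ^ a ∈ II i := by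
      rcases hne.lt_or_gt with h | h
      · refine ⟨x0, y0, h, ?_⟩
        have := (Submodule.Quotient.eq (II i)).1 heq
        simpa using Submodule.neg_mem _ this
      · exact ⟨y0, x0, h, (Submodule.Quotient.eq (II i)).1 heq⟩
    obtain ⟨a, b, hab, hmem⟩ := H
    have hd0 : 0 < b - a := Nat.sub_pos_of_lt hab
    have hstep : ∀ j : ℕ, U ^ (j + b) - U ^ (j + a) ∈ II i := by
      intro j
      have := hmulL i (U ^ j) (U ^ b) (U ^ a) hmem
      rwa [← pow_add, ← pow_add] at this
    have hlad : ∀ t x : ℕ, a ≤ x → U ^ (x + t * (b - a)) - U ^ x ∈ II i := by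
      intro t
      induction t with
      | zero => intro x hx; simpa using Submodule.zero_mem (II i)
      | succ t ih =>
          intro x hx
          have h1 := ih x hx
          have h2 : U ^ (x + (t + 1) * (b - a)) - U ^ (x + t * (b - a)) ∈ II i := by
            have h3 := hstep (x + t * (b - a) - a)
            have e1 : (x + t * (b - a) - a) + a = x + t * (b - a) := by omega
            have e2 : (x + t * (b - a) - a) + b = x + (t + 1) * (b - a) := by
              rw [add_one_mul]; omega
            rw [e1, e2] at h3
            exact h3
          have h4 : U ^ (x + (t + 1) * (b - a)) - U ^ x
              = (U ^ (x + (t + 1) * (b - a)) - U ^ (x + t * (b - a)))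
                + (U ^ (x + t * (b - a)) - U ^ x) := by abel
          rw [h4]
          exact Submodule.add_mem _ h2 h1
    refine ⟨a, b - a, hd0, ?_⟩
    have hup : ∀ x y : ℕ, a ≤ x → x ≤ y → x % (b - a) = y % (b - a) → U ^ y - U ^ x ∈ II i := by
      intro x y hax hxy hmod
      have hdvd : (b - a) ∣ y - x := (Nat.modEq_iff_dvd' hxy).1 hmod
      obtain ⟨t, ht⟩ := hdvd
      rw [mul_comm] at ht
      have hyx : y = x + t * (b - a) := by omega
      rw [hyx]
      exact hlad t x hax
    intro x y hax hay hmod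
    rcases le_total x y with h | h
    · have := hup x y hax h hmod
      simpa using Submodule.neg_mem _ this
    · exact hup y x hay h hmod.symm
  -- thresholds
  have hN : ∀ i : ℕ, ∃ N₀ : ℕ, 0 < N₀ ∧
      (∀ m n : ℕ, N₀ ≤ m → N₀ ≤ n → U ^ n.factorial - U ^ m.factorial ∈ II i) ∧
      (∀ n : ℕ, N₀ ≤ n → U ^ (2 * n.factorial) - U ^ n.factorial ∈ II i) ∧
      (∀ k n : ℕ, N₀ ≤ k → N₀ ≤ n → U ^ (k + n.factorial) - U ^ k ∈ II i) := by
    intro i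
    obtain ⟨a, d, hd0, hcong⟩ := key i
    have hmod0 : ∀ x : ℕ, d ∣ x → x % d = 0 := by
      intro x hx; obtain ⟨t, rfl⟩ := hx; exact Nat.mul_mod_right d t
    have hdf : ∀ n : ℕ, max (a + 1) d ≤ n → d ∣ n.factorial :=
      fun n hn => Nat.dvd_factorial hd0 (le_trans (le_max_right _ _) hn)
    have haf : ∀ n : ℕ, max (a + 1) d ≤ n → a ≤ n.factorial := by
      intro n hn
      have h1 : a + 1 ≤ n := le_trans (le_max_left _ _) hn
      exact le_trans (by omega) (Nat.self_le_factorial n)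
    refine ⟨max (a + 1) d, lt_of_lt_of_le (Nat.succ_pos a) (le_max_left _ _), ?_, ?_, ?_⟩
    · intro m n hm hn
      exact hcong _ _ (haf n hn) (haf m hm)
        (by rw [hmod0 _ (hdf n hn), hmod0 _ (hdf m hm)])
    · intro n hn
      refine hcong _ _ (le_trans (haf n hn) (by omega)) (haf n hn) ?_
      rw [hmod0 _ (Dvd.dvd.mul_left (hdf n hn) 2), hmod0 _ (hdf n hn)]
    · intro k n hk hn
      refine hcong _ _ (le_trans (by omega : a ≤ k + 0) (by omega)) ?_ ?_
      · have h1 : a + 1 ≤ k := le_trans (le_max_left _ _) hk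
        omega
      · obtain ⟨t, ht⟩ := hdf n hn
        rw [ht, Nat.add_mul_mod_self_left]
  choose Nf hNf using hN
  -- monotone thresholds
  let K : ℕ → ℕ := fun i => Nat.rec (Nf 0) (fun j ih => max ih (Nf (j + 1))) i
  have hKsucc : ∀ i, K i ≤ K (i + 1) := fun i => le_max_left _ _
  have hKmono : Monotone K := monotone_nat_of_le_succ hKsucc
  have hKge : ∀ i, Nf i ≤ K i := by
    intro i
    cases i with
    | zero => exact le_refl _
    | succ j => exact le_max_right _ _
  -- the limit exists by completeness
  have hprec := aux_prec p (Module.End (integralClosure ℤ_[p] L) M)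
  have hcauchy : ∀ {m n : ℕ}, m ≤ n →
      (U ^ ((K m).factorial) : Module.End (integralClosure ℤ_[p] L) M)
        ≡ U ^ ((K n).factorial)
        [SMOD (Ideal.span {(p : ℤ_[p])}) ^ m •
          (⊤ : Submodule ℤ_[p] (Module.End (integralClosure ℤ_[p] L) M))] := by
    intro m n hmn
    rw [SModEq.sub_mem]
    exact (hNf m).2.1 (K n) (K m) (le_trans (hKge m) (hKmono hmn)) (hKge m)
  obtain ⟨e, he⟩ := hprec.prec (f := fun i => U ^ ((K i).factorial)) hcauchy
  have heI : ∀ n : ℕ, e - U ^ ((K n).factorial) ∈ II n := by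
    intro n
    have h1 := he n
    rw [SModEq.sub_mem] at h1
    simpa using Submodule.neg_mem _ h1
  have hconv : ∀ i n : ℕ, K i ≤ n → U ^ n.factorial - e ∈ II i := by
    intro i n hn
    have h1 : U ^ n.factorial - U ^ ((K i).factorial) ∈ II i :=
      (hNf i).2.1 (K i) n (hKge i) (le_trans (hKge i) hn)
    have h2 := heI i
    have h3 : U ^ n.factorial - e
        = (U ^ n.factorial - U ^ ((K i).factorial)) - (e - U ^ ((K i).factorial)) := by abel
    rw [h3]
    exact Submodule.sub_mem _ h1 h2
  -- Hausdorff separation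
  have hzero : ∀ F : Module.End (integralClosure ℤ_[p] L) M, (∀ i, F ∈ II i) → F = 0 := by
    intro F hF
    have h1 : F ∈ (⊥ : Submodule ℤ_[p] (Module.End (integralClosure ℤ_[p] L) M)) := by
      rw [← aux_haus p (Module.End (integralClosure ℤ_[p] L) M)]
      exact (Submodule.mem_iInf _).2 hF
    exact (Submodule.mem_bot ℤ_[p]).1 h1
  -- idempotency
  have hIdem : e * e = e := by
    refine sub_eq_zero.1 (hzero _ ?_)
    intro i
    have hf := heI i
    have t1 : e * e - e * U ^ ((K i).factorial) ∈ II i := hmulL i e e _ hf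
    have t2 : e * U ^ ((K i).factorial)
        - U ^ ((K i).factorial) * U ^ ((K i).factorial) ∈ II i := hmulR i _ e _ hf
    have t3 : U ^ ((K i).factorial) * U ^ ((K i).factorial) - U ^ ((K i).factorial) ∈ II i := by
      have h1 := (hNf i).2.2.1 (K i) (hKge i)
      rwa [two_mul, pow_add] at h1
    have t4 : U ^ ((K i).factorial) - e ∈ II i := by
      simpa using Submodule.neg_mem _ (heI i)
    have hsum : e * e - e = (e * e - e * U ^ ((K i).factorial))
        + ((e * U ^ ((K i).factorial) - U ^ ((K i).factorial) * U ^ ((K i).factorial))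
          + ((U ^ ((K i).factorial) * U ^ ((K i).factorial) - U ^ ((K i).factorial))
            + (U ^ ((K i).factorial) - e))) := by abel
    rw [hsum]
    exact Submodule.add_mem _ t1 (Submodule.add_mem _ t2 (Submodule.add_mem _ t3 t4))
  -- commutation with U
  have hComm : e * U = U * e := by
    refine sub_eq_zero.1 (hzero _ ?_)
    intro i
    have hf := heI i
    have t4 : U ^ ((K i).factorial) - e ∈ II i := by
      simpa using Submodule.neg_mem _ (heI i)
    have t1 : e * U - U ^ ((K i).factorial) * U ∈ II i := hmulR i U e _ hf
    have t2 : U * U ^ ((K i).factorial) - U * e ∈ II i := hmulL i U _ e t4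
    have hmid : U ^ ((K i).factorial) * U = U * U ^ ((K i).factorial) := by
      rw [← pow_succ, ← pow_succ']
    have hsum : e * U - U * e = (e * U - U ^ ((K i).factorial) * U)
        + (U * U ^ ((K i).factorial) - U * e) := by
      rw [← hmid]; abel
    rw [hsum]
    exact Submodule.add_mem _ t1 t2
  have hUe : ∀ x : M, U (e x) = e (U x) := by
    intro x
    rw [← Module.End.mul_apply, ← Module.End.mul_apply, hComm]
  have hcommn : ∀ (n : ℕ) (v : M), e ((U ^ n) v) = (U ^ n) (e v) := by
    intro n v
    have hcn : e * U ^ n = U ^ n * e := Commute.pow_right hComm n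
    rw [← Module.End.mul_apply, hcn, Module.End.mul_apply]
  -- the range of e is U-stable with U surjective on it
  have hmaple : Submodule.map U (LinearMap.range e) ≤ LinearMap.range e := by
    rintro _ ⟨y, ⟨x, rfl⟩, rfl⟩
    exact ⟨U x, (hUe x).symm⟩
  have hjac : Ideal.span {(p : integralClosure ℤ_[p] L)} ≤ Ideal.jacobson ⊥ := by
    rw [Ideal.span_le, Set.singleton_subset_iff]
    haveI : Algebra.IsIntegral ℤ_[p] (integralClosure ℤ_[p] L) :=
      Algebra.IsIntegral.of_finite _ _
    rw [SetLike.mem_coe, Ideal.jacobson, Ideal.mem_sInf]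
    rintro J ⟨-, hJ⟩
    haveI := hJ
    have hcm : (Ideal.comap (algebraMap ℤ_[p] (integralClosure ℤ_[p] L)) J).IsMaximal :=
      Ideal.isMaximal_comap_of_isIntegral_of_isMaximal J
    have hcp : (p : ℤ_[p]) ∈ Ideal.comap (algebraMap ℤ_[p] (integralClosure ℤ_[p] L)) J := by
      rw [IsLocalRing.eq_maximalIdeal hcm, PadicInt.maximalIdeal_eq_span_p]
      exact Ideal.subset_span rfl
    have h2 := Ideal.mem_comap.1 hcp
    rwa [map_natCast] at h2
  have hle2 : LinearMap.range e ≤ Submodule.map U (LinearMap.range e)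
      ⊔ Ideal.span {(p : integralClosure ℤ_[p] L)} • LinearMap.range e := by
    rintro _ ⟨x, rfl⟩
    obtain ⟨m', hm'⟩ := Nat.exists_eq_succ_of_ne_zero (Nat.factorial_ne_zero (K 1))
    have hm2 : (K 1).factorial = m' + 1 := hm'
    have h1 : e - U ^ ((K 1).factorial) ∈ II 1 := heI 1
    obtain ⟨c, hc⟩ := (mem_span_pow_smul_iff' _ _ _).1 h1
    rw [pow_one] at hc
    have hpt : ∀ v : M, e v = (U ^ ((K 1).factorial)) v + (p : ℤ_[p]) • c v := by
      intro v
      have h2 := congrArg (fun F : Module.End (integralClosure ℤ_[p] L) M => F v) hc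
      simp only [LinearMap.sub_apply, LinearMap.smul_apply] at h2
      rw [add_comm]
      exact sub_eq_iff_eq_add.1 h2
    have hidx : e x = e (e (e x)) := by
      rw [← Module.End.mul_apply, hIdem, ← Module.End.mul_apply, hIdem]
    have h2 : e x = e ((U ^ ((K 1).factorial)) (e x)) + (p : ℤ_[p]) • e (c (e x)) := by
      calc e x = e (e (e x)) := hidx
        _ = e ((U ^ ((K 1).factorial)) (e x) + (p : ℤ_[p]) • c (e x)) := by rw [← hpt (e x)]
        _ = e ((U ^ ((K 1).factorial)) (e x)) + (p : ℤ_[p]) • e (c (e x)) := by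
            rw [map_add, LinearMap.map_smul_of_tower]
    have h3 : e ((U ^ ((K 1).factorial)) (e x)) = U (e ((U ^ m') (e x))) := by
      calc e ((U ^ ((K 1).factorial)) (e x)) = (U ^ ((K 1).factorial)) (e (e x)) :=
            hcommn _ _
        _ = (U ^ (m' + 1)) (e (e x)) := by rw [hm2]
        _ = U ((U ^ m') (e (e x))) := by rw [pow_succ']; rfl
        _ = U ((U ^ m') (e (e x))) := rfl
        _ = U (e ((U ^ m') (e x))) := by rw [← hcommn m' (e x)]
    rw [h2, h3]
    refine Submodule.add_mem_sup ?_ ?_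
    · exact Submodule.mem_map_of_mem ⟨(U ^ m') (e x), rfl⟩
    · have h4 : (p : ℤ_[p]) • e (c (e x)) = (p : integralClosure ℤ_[p] L) • e (c (e x)) := by
        rw [hsmul, map_natCast]
      rw [h4]
      exact Submodule.smul_mem_smul (Ideal.subset_span rfl) ⟨c (e x), rfl⟩
  have hrange_fg : (LinearMap.range e).FG := IsNoetherian.noetherian _
  have hmapeq : Submodule.map U (LinearMap.range e) = LinearMap.range e :=
    le_antisymm hmaple (Submodule.le_of_le_smul_of_le_jacobson_bot hrange_fg hjac hle2)
  -- injectivity of U on the range of e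
  have hstab : ∀ x ∈ LinearMap.range e, U x ∈ LinearMap.range e := by
    rintro _ ⟨x, rfl⟩
    exact ⟨U x, (hUe x).symm⟩
  have hinj : ∀ x : M, U (e x) = 0 → e x = 0 := by
    haveI : Module.Finite (integralClosure ℤ_[p] L) ↥(LinearMap.range e) :=
      Module.Finite.range e
    have hsurj : Function.Surjective (U.restrict hstab) := by
      rintro ⟨y, hy⟩
      rw [← hmapeq] at hy
      obtain ⟨x, hx, hxy⟩ := hy
      exact ⟨⟨x, hx⟩, Subtype.ext (by simpa [LinearMap.restrict_apply] using hxy)⟩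
    have hinj' := OrzechProperty.injective_of_surjective_endomorphism (U.restrict hstab) hsurj
    intro x hx
    have h0 : (U.restrict hstab) ⟨e x, ⟨x, rfl⟩⟩ = 0 :=
      Subtype.ext (by simpa [LinearMap.restrict_apply] using hx)
    have h1 := hinj' (h0.trans (map_zero (U.restrict hstab)).symm)
    exact congrArg Subtype.val h1
  refine ⟨e, ?_, hIdem, hComm, ?_, hmapeq, hinj, ?_⟩
  · -- convergence
    intro i
    refine ⟨K i, fun n hn x => ?_⟩
    have h1 := happly i _ (hconv i n hn) x
    rwa [LinearMap.sub_apply] at h1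
  · -- IsCompl
    constructor
    · rw [Submodule.disjoint_def]
      rintro x ⟨u1, hu1⟩ ⟨u2, hu2⟩
      have hex : e x = x := by
        rw [← hu1, ← Module.End.mul_apply, hIdem]
      have hzero2 : e * (1 - e) = 0 := by
        rw [mul_sub, mul_one, hIdem, sub_self]
      have hex0 : e x = 0 := by
        rw [← hu2, ← Module.End.mul_apply, hzero2, LinearMap.zero_apply]
      rw [← hex, hex0]
    · rw [codisjoint_iff, eq_top_iff]
      intro x _
      refine Submodule.mem_sup.2 ⟨e x, ⟨x, rfl⟩, (1 - e) x, ⟨x, rfl⟩, ?_⟩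
      simp [LinearMap.sub_apply]
  · -- topological nilpotence
    intro i
    refine ⟨max (Nf i) (K i), fun n hn x => ?_⟩
    have hn1 : Nf i ≤ n := le_trans (le_max_left _ _) hn
    have t1 : U ^ n * e - U ^ n * U ^ ((K i).factorial) ∈ II i :=
      hmulL i (U ^ n) e _ (heI i)
    have t2 : U ^ (n + (K i).factorial) - U ^ n ∈ II i :=
      (hNf i).2.2.2 n (K i) hn1 (hKge i)
    have t3 : U ^ n * (1 - e) ∈ II i := by
      have hid : U ^ n * (1 - e)
          = -(U ^ n * e - U ^ n * U ^ ((K i).factorial))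
            - (U ^ (n + (K i).factorial) - U ^ n) := by
        rw [mul_sub, mul_one, pow_add]
        abel
      rw [hid]
      exact Submodule.sub_mem _ (Submodule.neg_mem _ t1) t2
    have h1 := happly i _ t3 x
    rwa [Module.End.mul_apply] at h1
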